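/- arXiv:2006.05773 — 2 statements merged into one kernel-verified Lean document; each statement's English description precedes it below -/
import Mathlib

section
/- Let F ∈ C⁰(T⁷) and let φ ∈ C²(T⁷) be a solution of equation (‡). Then at every point of ℝ⁷ and for every nonzero ξ = (ξ₁,…,ξ₇) ∈ ℝ⁷ one has B(ξ₁²+ξ₂²+ξ₃²+ξ₄²) + A(ξ₅²+ξ₆²+ξ₇²) − 2a₁(ξ₄ξ₅ − ξ₁ξ₆ − ξ₂ξ₇) − 2a₂(ξ₃ξ₅ + ξ₁ξ₇ − ξ₂ξ₆) − 2a₃(ξ₃ξ₆ + ξ₄ξ₇ + ξ₂ξ₅) − 2a₄(ξ₄ξ₆ − ξ₃ξ₇ + ξ₁ξ₅) > 0; in particular equation (‡) is elliptic at any solution. -/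
open MeasureTheory

/-- Partial derivative in the `i`-th coordinate direction. -/
noncomputable def pd {n : ℕ} (i : Fin n) (f : (Fin n → ℝ) → ℝ) : (Fin n → ℝ) → ℝ :=
  fun x => fderiv ℝ f x (Pi.single i 1)

/-- Second partial derivative `∂²f/∂x^i∂x^j`. -/
noncomputable def pd2 {n : ℕ} (i j : Fin n) (f : (Fin n → ℝ) → ℝ) : (Fin n → ℝ) → ℝ :=
  pd i (pd j f)

/-- A function on `ℝⁿ` that is `1`-periodic in every coordinate, i.e. a function on `Tⁿ`. -/
def PeriodicPi {n : ℕ} (f : (Fin n → ℝ) → ℝ) : Prop :=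
  ∀ x : Fin n → ℝ, ∀ i : Fin n, f (x + Pi.single i 1) = f x

/-- `A = φ₁₁ + φ₂₂ + φ₃₃ + φ₄₄ + 1` on `T⁷`. -/
noncomputable def A7 (φ : (Fin 7 → ℝ) → ℝ) : (Fin 7 → ℝ) → ℝ :=
  fun x => pd2 0 0 φ x + pd2 1 1 φ x + pd2 2 2 φ x + pd2 3 3 φ x + 1

/-- `B = φ₅₅ + φ₆₆ + φ₇₇ + 1` on `T⁷`. -/
noncomputable def B7 (φ : (Fin 7 → ℝ) → ℝ) : (Fin 7 → ℝ) → ℝ :=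
  fun x => pd2 4 4 φ x + pd2 5 5 φ x + pd2 6 6 φ x + 1

/-- `a₁ = φ₄₅ − φ₁₆ − φ₂₇`. -/
noncomputable def a₁7 (φ : (Fin 7 → ℝ) → ℝ) : (Fin 7 → ℝ) → ℝ :=
  fun x => pd2 3 4 φ x - pd2 0 5 φ x - pd2 1 6 φ x

/-- `a₂ = φ₃₅ + φ₁₇ − φ₂₆`. -/
noncomputable def a₂7 (φ : (Fin 7 → ℝ) → ℝ) : (Fin 7 → ℝ) → ℝ :=
  fun x => pd2 2 4 φ x + pd2 0 6 φ x - pd2 1 5 φ x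

/-- `a₃ = φ₃₆ + φ₄₇ + φ₂₅`. -/
noncomputable def a₃7 (φ : (Fin 7 → ℝ) → ℝ) : (Fin 7 → ℝ) → ℝ :=
  fun x => pd2 2 5 φ x + pd2 3 6 φ x + pd2 1 4 φ x

/-- `a₄ = φ₄₆ − φ₃₇ + φ₁₅`. -/
noncomputable def a₄7 (φ : (Fin 7 → ℝ) → ℝ) : (Fin 7 → ℝ) → ℝ :=
  fun x => pd2 3 5 φ x - pd2 2 6 φ x + pd2 0 4 φ x

/-- Equation (‡): the reduction of the quaternionic Monge–Ampère equation on `M₁` to the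
base `T⁷` for `S¹`-invariant data. -/
def EqDDagger (F φ : (Fin 7 → ℝ) → ℝ) : Prop :=
  ∀ x : Fin 7 → ℝ,
    A7 φ x * B7 φ x - (a₁7 φ x) ^ 2 - (a₂7 φ x) ^ 2 - (a₃7 φ x) ^ 2 - (a₄7 φ x) ^ 2
      = Real.exp (F x)


open Set Filter Topology in
lemma contDiff_pd' {n : ℕ} {f : (Fin n → ℝ) → ℝ} (hf : ContDiff ℝ 2 f) (j : Fin n) :
    ContDiff ℝ 1 (pd j f) := by
  have h := hf.fderiv_right (m := 1) (by norm_num)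
  exact h.clm_apply contDiff_const

open Set Filter Topology in
lemma continuous_pd2' {n : ℕ} {f : (Fin n → ℝ) → ℝ} (hf : ContDiff ℝ 2 f) (i j : Fin n) :
    Continuous (pd2 i j f) := by
  have h := ((contDiff_pd' hf j).fderiv_right (m := 0) (by norm_num)).continuous
  exact h.clm_apply continuous_const

open Set Filter Topology in
lemma hasDerivAt_line' {n : ℕ} {f : (Fin n → ℝ) → ℝ} (hf : Differentiable ℝ f)
    (x v : Fin n → ℝ) (t : ℝ) :
    HasDerivAt (fun s : ℝ => f (x + s • v)) (fderiv ℝ f (x + t • v) v) t := by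
  have h1 : HasDerivAt (fun s : ℝ => x + s • v) v t := by
    simpa using ((hasDerivAt_id t).smul_const v).const_add x
  exact (hf (x + t • v)).hasFDerivAt.comp_hasDerivAt t h1

open Set Filter Topology in
lemma second_deriv_nonneg_of_min' {g g' : ℝ → ℝ} {c : ℝ}
    (hg : ∀ t, HasDerivAt g (g' t) t) (hg' : HasDerivAt g' c 0)
    (hmin : ∀ t, g 0 ≤ g t) : 0 ≤ c := by
  by_contra hc
  push_neg at hc
  have h0 : g' 0 = 0 := by
    have hm : IsLocalMin g 0 := Filter.Eventually.of_forall hmin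
    exact hm.hasDerivAt_eq_zero (hg 0)
  have hslope : Tendsto (slope g' 0) (𝓝[≠] 0) (𝓝 c) :=
    hasDerivAt_iff_tendsto_slope.mp hg'
  have hev : ∀ᶠ t in 𝓝[≠] (0:ℝ), slope g' 0 t < 0 :=
    hslope.eventually_lt_const hc
  have hev' : ∀ᶠ t in 𝓝[>] (0:ℝ), g' t < 0 := by
    have hmono : 𝓝[>] (0:ℝ) ≤ 𝓝[≠] (0:ℝ) :=
      nhdsWithin_mono _ (fun t ht => ne_of_gt ht)
    filter_upwards [hev.filter_mono hmono, self_mem_nhdsWithin] with t ht ht'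
    have hs : slope g' 0 t = g' t / t := by
      simp [slope_def_field, h0]
    rw [hs] at ht
    have := mul_neg_of_neg_of_pos ht (ht' : (0:ℝ) < t)
    rwa [div_mul_cancel₀] at this
    exact ne_of_gt ht'
  obtain ⟨u, hu, hsub⟩ := mem_nhdsGT_iff_exists_Ioo_subset.mp hev'
  have hu0 : (0:ℝ) < u := hu
  have hanti : StrictAntiOn g (Icc 0 u) := by
    apply strictAntiOn_of_deriv_neg (convex_Icc 0 u)
      (fun t _ => (hg t).continuousAt.continuousWithinAt)
    intro t ht
    rw [interior_Icc] at ht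
    rw [(hg t).deriv]
    exact hsub ht
  have : g u < g 0 := hanti (left_mem_Icc.mpr hu0.le) (right_mem_Icc.mpr hu0.le) hu0
  exact absurd (hmin u) (not_le.mpr this)

open Set Filter Topology in
lemma pd2_nonneg_at_min' {n : ℕ} {f : (Fin n → ℝ) → ℝ} (hf : ContDiff ℝ 2 f)
    {x₀ : Fin n → ℝ} (hmin : ∀ y, f x₀ ≤ f y) (i : Fin n) : 0 ≤ pd2 i i f x₀ := by
  set e : Fin n → ℝ := Pi.single i 1 with he
  have hdf : Differentiable ℝ f := hf.differentiable (by norm_num)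
  have hdf1 : Differentiable ℝ (pd i f) := (contDiff_pd' hf i).differentiable (by norm_num)
  set g : ℝ → ℝ := fun t => f (x₀ + t • e) with hgdef
  set g' : ℝ → ℝ := fun t => pd i f (x₀ + t • e) with hg'def
  have hg : ∀ t, HasDerivAt g (g' t) t := fun t => hasDerivAt_line' hdf x₀ e t
  have hg' : HasDerivAt g' (pd2 i i f x₀) 0 := by
    have h := hasDerivAt_line' hdf1 x₀ e 0
    rw [zero_smul, add_zero] at h
    exact h
  have hm : ∀ t, g 0 ≤ g t := by
    intro t
    simpa [hgdef] using hmin (x₀ + t • e)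
  exact second_deriv_nonneg_of_min' hg hg' hm

open Set Filter Topology in
lemma pos_everywhere' {n : ℕ} {g : (Fin n → ℝ) → ℝ} (hg : Continuous g)
    (hne : ∀ x, g x ≠ 0) {x₀ : Fin n → ℝ} (h0 : 0 < g x₀) : ∀ x, 0 < g x := by
  intro x
  by_contra h
  push_neg at h
  have hx : g x < 0 := lt_of_le_of_ne h (hne x)
  set γ : ℝ → (Fin n → ℝ) := fun t => x₀ + t • (x - x₀) with hγ
  have hcγ : Continuous (g ∘ γ) := by
    apply hg.comp
    exact continuous_const.add (continuous_id.smul continuous_const)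
  have hmem : (0:ℝ) ∈ Icc ((g ∘ γ) 1) ((g ∘ γ) 0) := by
    constructor
    · simp only [Function.comp, hγ, one_smul]
      simp only [add_sub_cancel]
      exact hx.le
    · simp only [Function.comp, hγ, zero_smul, add_zero]
      exact h0.le
  obtain ⟨t, _, ht⟩ := intermediate_value_Icc' (by norm_num : (0:ℝ) ≤ 1)
    hcγ.continuousOn hmem
  exact hne (γ t) ht

open Set Filter Topology in
lemma per_update' {n : ℕ} {f : (Fin n → ℝ) → ℝ} (hper : PeriodicPi f)
    (x : Fin n → ℝ) (i : Fin n) (t : ℝ) :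
    f (Function.update x i (Int.fract t)) = f (Function.update x i t) := by
  have hp : Function.Periodic (fun s => f (Function.update x i s)) 1 := by
    intro s
    have h : Function.update x i (s + 1) = Function.update x i s + Pi.single i 1 := by
      ext j
      rcases eq_or_ne j i with rfl | hj
      · simp
      · simp [Function.update_of_ne hj, Pi.single_eq_of_ne hj]
    simp only [h]
    exact hper _ i
  have h := hp.sub_int_mul_eq (x := t) ⌊t⌋
  simp only [mul_one] at h
  rw [Int.fract]
  exact h

open Set Filter Topology in
lemma per_fract' {n : ℕ} {f : (Fin n → ℝ) → ℝ} (hper : PeriodicPi f) (y : Fin n → ℝ) :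
    f (fun i => Int.fract (y i)) = f y := by
  classical
  have key : ∀ s : Finset (Fin n),
      f (fun i => if i ∈ s then Int.fract (y i) else y i) = f y := by
    intro s
    induction s using Finset.induction with
    | empty => simp
    | @insert j s hj ih =>
      set w : Fin n → ℝ := fun i => if i ∈ s then Int.fract (y i) else y i with hw
      have h1 : (fun i => if i ∈ insert j s then Int.fract (y i) else y i)
          = Function.update w j (Int.fract (y j)) := by
        ext i
        rcases eq_or_ne i j with rfl | hij
        · simp
        · simp [Function.update_of_ne hij, hij, hw, Finset.mem_insert]
      have h2 : Function.update w j (y j) = w := by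
        ext i
        rcases eq_or_ne i j with rfl | hij
        · simp [hw, hj]
        · simp [Function.update_of_ne hij]
      rw [h1, per_update' hper w j (y j), h2, ih]
  simpa using key Finset.univ

open Set Filter Topology in
lemma exists_global_min' {n : ℕ} {f : (Fin n → ℝ) → ℝ} (hf : Continuous f)
    (hper : PeriodicPi f) : ∃ x₀ : Fin n → ℝ, ∀ y, f x₀ ≤ f y := by
  have hK : IsCompact (Icc (0 : Fin n → ℝ) 1) := isCompact_Icc
  have h0 : (0 : Fin n → ℝ) ∈ Icc (0 : Fin n → ℝ) 1 :=
    left_mem_Icc.mpr (by intro i; norm_num)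
  obtain ⟨x₀, _, hmin⟩ := hK.exists_isMinOn ⟨0, h0⟩ hf.continuousOn
  refine ⟨x₀, fun y => ?_⟩
  have hy : (fun i => Int.fract (y i)) ∈ Icc (0 : Fin n → ℝ) 1 := by
    constructor
    · intro i; exact Int.fract_nonneg _
    · intro i; exact (Int.fract_lt_one _).le
  calc f x₀ ≤ f (fun i => Int.fract (y i)) := hmin hy
    _ = f y := per_fract' hper y


set_option maxHeartbeats 1000000 in
/-- Ellipticity of equation (‡) at any solution. -/
theorem ellipticity_of_eqDDagger
    (F φ : (Fin 7 → ℝ) → ℝ) (hF : Continuous F) (hFper : PeriodicPi F)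
    (hφ : ContDiff ℝ 2 φ) (hφper : PeriodicPi φ) (heq : EqDDagger F φ) :
    ∀ x : Fin 7 → ℝ, ∀ ξ : Fin 7 → ℝ, ξ ≠ 0 →
      0 < B7 φ x * ((ξ 0) ^ 2 + (ξ 1) ^ 2 + (ξ 2) ^ 2 + (ξ 3) ^ 2)
          + A7 φ x * ((ξ 4) ^ 2 + (ξ 5) ^ 2 + (ξ 6) ^ 2)
          - 2 * a₁7 φ x * (ξ 3 * ξ 4 - ξ 0 * ξ 5 - ξ 1 * ξ 6)
          - 2 * a₂7 φ x * (ξ 2 * ξ 4 + ξ 0 * ξ 6 - ξ 1 * ξ 5)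
          - 2 * a₃7 φ x * (ξ 2 * ξ 5 + ξ 3 * ξ 6 + ξ 1 * ξ 4)
          - 2 * a₄7 φ x * (ξ 3 * ξ 5 - ξ 2 * ξ 6 + ξ 0 * ξ 4) := by
  intro x ξ hξ
  have hE : ∀ y, (0:ℝ) < Real.exp (F y) := fun y => Real.exp_pos _
  -- A7 is continuous
  have hAcont : Continuous (A7 φ) := by
    unfold A7
    exact ((((continuous_pd2' hφ 0 0).add (continuous_pd2' hφ 1 1)).add
      (continuous_pd2' hφ 2 2)).add (continuous_pd2' hφ 3 3)).add continuous_const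
  -- A7 is positive at a global minimum of φ
  obtain ⟨x₀, hmin⟩ := exists_global_min' (hφ.continuous) hφper
  have hA0 : 0 < A7 φ x₀ := by
    have h0 := pd2_nonneg_at_min' hφ hmin 0
    have h1 := pd2_nonneg_at_min' hφ hmin 1
    have h2 := pd2_nonneg_at_min' hφ hmin 2
    have h3 := pd2_nonneg_at_min' hφ hmin 3
    unfold A7
    linarith
  -- A7 never vanishes
  have hAne : ∀ y, A7 φ y ≠ 0 := by
    intro y hy
    have h := heq y
    rw [hy, zero_mul] at h
    nlinarith [hE y, sq_nonneg (a₁7 φ y), sq_nonneg (a₂7 φ y), sq_nonneg (a₃7 φ y),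
      sq_nonneg (a₄7 φ y)]
  have hApos : 0 < A7 φ x := pos_everywhere' hAcont hAne hA0 x
  have hBpos : 0 < B7 φ x := by
    nlinarith [heq x, hE x, sq_nonneg (a₁7 φ x), sq_nonneg (a₂7 φ x), sq_nonneg (a₃7 φ x),
      sq_nonneg (a₄7 φ x)]
  -- nonzero vector
  have hsum : 0 < (ξ 0)^2 + (ξ 1)^2 + (ξ 2)^2 + (ξ 3)^2 + (ξ 4)^2 + (ξ 5)^2 + (ξ 6)^2 := by
    obtain ⟨i, hi⟩ := Function.ne_iff.mp hξ
    have hi' : ξ i ≠ 0 := by simpa using hi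
    have hips : 0 < (ξ i)^2 := lt_of_le_of_ne (sq_nonneg _) (Ne.symm (pow_ne_zero _ hi'))
    have h1 : 0 < ∑ j : Fin 7, (ξ j)^2 :=
      lt_of_lt_of_le hips (Finset.single_le_sum (fun j _ => sq_nonneg (ξ j))
        (Finset.mem_univ i))
    rw [Fin.sum_univ_seven] at h1
    linarith
  have heqx := heq x
  have hEx : 0 < Real.exp (F x) := Real.exp_pos _
  revert hApos hBpos heqx hEx
  generalize Real.exp (F x) = E
  generalize A7 φ x = A
  generalize B7 φ x = B
  generalize a₁7 φ x = a1
  generalize a₂7 φ x = a2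
  generalize a₃7 φ x = a3
  generalize a₄7 φ x = a4
  intro hApos hBpos heqx hEx
  by_cases hq : 0 < (ξ 4)^2 + (ξ 5)^2 + (ξ 6)^2
  · have hkey : B * (B * ((ξ 0) ^ 2 + (ξ 1) ^ 2 + (ξ 2) ^ 2 + (ξ 3) ^ 2)
          + A * ((ξ 4) ^ 2 + (ξ 5) ^ 2 + (ξ 6) ^ 2)
          - 2 * a1 * (ξ 3 * ξ 4 - ξ 0 * ξ 5 - ξ 1 * ξ 6)
          - 2 * a2 * (ξ 2 * ξ 4 + ξ 0 * ξ 6 - ξ 1 * ξ 5)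
          - 2 * a3 * (ξ 2 * ξ 5 + ξ 3 * ξ 6 + ξ 1 * ξ 4)
          - 2 * a4 * (ξ 3 * ξ 5 - ξ 2 * ξ 6 + ξ 0 * ξ 4))
        = E * ((ξ 4)^2 + (ξ 5)^2 + (ξ 6)^2)
          + (B * ξ 0 - (a4 * ξ 4 - a1 * ξ 5 + a2 * ξ 6))^2
          + (B * ξ 1 - (a3 * ξ 4 - a2 * ξ 5 - a1 * ξ 6))^2
          + (B * ξ 2 - (a2 * ξ 4 + a3 * ξ 5 - a4 * ξ 6))^2
          + (B * ξ 3 - (a1 * ξ 4 + a4 * ξ 5 + a3 * ξ 6))^2 := by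
      linear_combination ((ξ 4)^2 + (ξ 5)^2 + (ξ 6)^2) * heqx
    nlinarith [hkey, mul_pos hEx hq, hBpos,
      sq_nonneg (B * ξ 0 - (a4 * ξ 4 - a1 * ξ 5 + a2 * ξ 6)),
      sq_nonneg (B * ξ 1 - (a3 * ξ 4 - a2 * ξ 5 - a1 * ξ 6)),
      sq_nonneg (B * ξ 2 - (a2 * ξ 4 + a3 * ξ 5 - a4 * ξ 6)),
      sq_nonneg (B * ξ 3 - (a1 * ξ 4 + a4 * ξ 5 + a3 * ξ 6))]
  · push_neg at hq
    have h4 : ξ 4 = 0 := by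
      have hs : (ξ 4)^2 = 0 :=
        le_antisymm (by linarith [sq_nonneg (ξ 4), sq_nonneg (ξ 5), sq_nonneg (ξ 6)]) (sq_nonneg _)
      exact pow_eq_zero_iff two_ne_zero |>.mp hs
    have h5 : ξ 5 = 0 := by
      have hs : (ξ 5)^2 = 0 :=
        le_antisymm (by linarith [sq_nonneg (ξ 4), sq_nonneg (ξ 5), sq_nonneg (ξ 6)]) (sq_nonneg _)
      exact pow_eq_zero_iff two_ne_zero |>.mp hs
    have h6 : ξ 6 = 0 := by
      have hs : (ξ 6)^2 = 0 :=
        le_antisymm (by linarith [sq_nonneg (ξ 4), sq_nonneg (ξ 5), sq_nonneg (ξ 6)]) (sq_nonneg _)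
      exact pow_eq_zero_iff two_ne_zero |>.mp hs
    have hp : 0 < (ξ 0)^2 + (ξ 1)^2 + (ξ 2)^2 + (ξ 3)^2 := by
      rw [h4, h5, h6] at hsum
      linarith [hsum]
    rw [h4, h5, h6]
    ring_nf
    nlinarith [mul_pos hBpos hp]
end

section
/- Let A, B, a₁, a₂, a₃, a₄, E be real numbers with B > 0 and AB − (a₁²+a₂²+a₃²+a₄²) = E > 0. Consider the quadratic form on ℝ⁷ given by Q(ξ) = B(ξ₁²+ξ₂²+ξ₃²+ξ₄²) + A(ξ₅²+ξ₆²+ξ₇²) − 2|a₁|(ξ₄ξ₅+ξ₁ξ₆+ξ₂ξ₇) − 2|a₂|(ξ₃ξ₅+ξ₁ξ₇+ξ₂ξ₆) − 2|a₃|(ξ₃ξ₆+ξ₄ξ₇+ξ₂ξ₅) − 2|a₄|(ξ₄ξ₆+ξ₃ξ₇+ξ₁ξ₅). Then Q is positive definite if and only if both E² − 4(|a₂a₃|+|a₁a₄|)² > 0 and E³ − 4E((|a₂a₃|+|a₁a₄|)² + (|a₁a₃|+|a₂a₄|)² + (|a₁a₂|+|a₃a₄|)²) − 16(|a₂a₃|+|a₁a₄|)(|a₁a₃|+|a₂a₄|)(|a₁a₂|+|a₃a₄|)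 > 0. -/
private lemma master7 (B E A α β γ δ x0 x1 x2 x3 y0 y1 y2 p q r : ℝ)
    (h : A * B = E + (α^2+β^2+γ^2+δ^2))
    (hp : p = β*γ + α*δ) (hq : q = α*γ + β*δ) (hr : r = α*β + γ*δ) :
    B * (B*(x0^2+x1^2+x2^2+x3^2) + A*(y0^2+y1^2+y2^2)
      - 2*α*(x3*y0+x0*y1+x1*y2) - 2*β*(x2*y0+x0*y2+x1*y1)
      - 2*γ*(x2*y1+x3*y2+x1*y0) - 2*δ*(x3*y1+x2*y2+x0*y0))
    = (B*x0 - (δ*y0+α*y1+β*y2))^2 + (B*x1 - (γ*y0+β*y1+α*y2))^2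
      + (B*x2 - (β*y0+γ*y1+δ*y2))^2 + (B*x3 - (α*y0+δ*y1+γ*y2))^2
      + (E*(y0^2+y1^2+y2^2) - 4*p*y0*y1 - 4*q*y0*y2 - 4*r*y1*y2) := by
  linear_combination (y0^2+y1^2+y2^2) * h + 4*y0*y1*hp + 4*y0*y2*hq + 4*y1*y2*hr

private lemma Nid7 (E p q r y0 y1 y2 : ℝ) :
    E * (E^2 - 4*p^2) * (E*(y0^2+y1^2+y2^2) - 4*p*y0*y1 - 4*q*y0*y2 - 4*r*y1*y2)
    = (E^2-4*p^2) * (E*y0 - 2*p*y1 - 2*q*y2)^2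
      + ((E^2-4*p^2)*y1 - (2*r*E+4*p*q)*y2)^2
      + E * (E^3 - 4*E*(p^2+q^2+r^2) - 16*p*q*r) * y2^2 := by
  ring

private def vec7 (v0 v1 v2 v3 v4 v5 v6 : ℝ) : Fin 7 → ℝ := fun i =>
  match i with
  | 0 => v0 | 1 => v1 | 2 => v2 | 3 => v3 | 4 => v4 | 5 => v5 | 6 => v6

private lemma pos_of_mul_pos3 (E D s : ℝ) (hE : 0 < E) (hs : 0 < s)
    (h : 0 < E * D * s) : 0 < D := by
  by_contra hc
  push_neg at hc
  nlinarith [mul_nonneg (neg_nonneg.mpr hc) hs.le]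

private lemma nonpos_of_pos_mul (c s : ℝ) (hc : 0 < c) (h : c * s ≤ 0) : s ≤ 0 := by
  nlinarith

private lemma helper_T1 (c B Q : ℝ) (hc : 0 < c) (hB : 0 < B) (hQ : Q ≤ 0) :
    c * (B * Q) ≤ 0 := by
  have h1 : B * Q ≤ 0 := by nlinarith
  nlinarith [h1]

private lemma sq_le_zero' {x : ℝ} (h : x^2 ≤ 0) : x = 0 := by
  nlinarith [sq_nonneg x]

set_option maxHeartbeats 2000000 in
/-- The quadratic form on `ℝ⁷` from Section 7 of the paper is positive definite if and
only if the two stated determinant conditions hold. -/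
theorem Q7_posDef_iff
    (A B E a₁ a₂ a₃ a₄ : ℝ) (hB : 0 < B)
    (hE : A * B - (a₁ ^ 2 + a₂ ^ 2 + a₃ ^ 2 + a₄ ^ 2) = E) (hEpos : 0 < E) :
    (∀ ξ : Fin 7 → ℝ, ξ ≠ 0 →
      0 < B * ((ξ 0) ^ 2 + (ξ 1) ^ 2 + (ξ 2) ^ 2 + (ξ 3) ^ 2)
          + A * ((ξ 4) ^ 2 + (ξ 5) ^ 2 + (ξ 6) ^ 2)
          - 2 * |a₁| * (ξ 3 * ξ 4 + ξ 0 * ξ 5 + ξ 1 * ξ 6)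
          - 2 * |a₂| * (ξ 2 * ξ 4 + ξ 0 * ξ 6 + ξ 1 * ξ 5)
          - 2 * |a₃| * (ξ 2 * ξ 5 + ξ 3 * ξ 6 + ξ 1 * ξ 4)
          - 2 * |a₄| * (ξ 3 * ξ 5 + ξ 2 * ξ 6 + ξ 0 * ξ 4))
    ↔ (0 < E ^ 2 - 4 * (|a₂ * a₃| + |a₁ * a₄|) ^ 2 ∧
        0 < E ^ 3
          - 4 * E * ((|a₂ * a₃| + |a₁ * a₄|) ^ 2 + (|a₁ * a₃| + |a₂ * a₄|) ^ 2
              + (|a₁ * a₂| + |a₃ * a₄|) ^ 2)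
          - 16 * (|a₂ * a₃| + |a₁ * a₄|) * (|a₁ * a₃| + |a₂ * a₄|)
              * (|a₁ * a₂| + |a₃ * a₄|)) := by
  set α := |a₁| with hαdef
  set β := |a₂| with hβdef
  set γ := |a₃| with hγdef
  set δ := |a₄| with hδdef
  have hα : 0 ≤ α := abs_nonneg _
  have hβ : 0 ≤ β := abs_nonneg _
  have hγ : 0 ≤ γ := abs_nonneg _
  have hδ : 0 ≤ δ := abs_nonneg _
  have hAB : A * B = E + (α^2+β^2+γ^2+δ^2) := by
    rw [hαdef, hβdef, hγdef, hδdef, sq_abs, sq_abs, sq_abs, sq_abs]; linarith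
  have habs23 : |a₂ * a₃| = β * γ := by rw [abs_mul, hβdef, hγdef]
  have habs14 : |a₁ * a₄| = α * δ := by rw [abs_mul, hαdef, hδdef]
  have habs13 : |a₁ * a₃| = α * γ := by rw [abs_mul, hαdef, hγdef]
  have habs24 : |a₂ * a₄| = β * δ := by rw [abs_mul, hβdef, hδdef]
  have habs12 : |a₁ * a₂| = α * β := by rw [abs_mul, hαdef, hβdef]
  have habs34 : |a₃ * a₄| = γ * δ := by rw [abs_mul, hγdef, hδdef]
  rw [habs23, habs14, habs13, habs24, habs12, habs34]
  set p := β * γ + α * δ with hpdef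
  set q := α * γ + β * δ with hqdef
  set r := α * β + γ * δ with hrdef
  have hp : 0 ≤ p := by rw [hpdef]; positivity
  have hq : 0 ≤ q := by rw [hqdef]; positivity
  have hr : 0 ≤ r := by rw [hrdef]; positivity
  constructor
  · intro h
    have hD2 : 0 < E ^ 2 - 4 * p ^ 2 := by
      -- plug in ξ = (M(1,1,0), B, B, 0)
      have hne : vec7 (δ+α) (γ+β) (β+γ) (α+δ) B B 0 ≠ 0 := by
        intro h0
        have h4 : B = (0:ℝ) := congrFun h0 (4 : Fin 7)
        linarith
      have hQ0 := h _ hne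
      have hQ : 0 < B * ((δ+α) ^ 2 + (γ+β) ^ 2 + (β+γ) ^ 2 + (α+δ) ^ 2)
          + A * (B ^ 2 + B ^ 2 + (0:ℝ) ^ 2)
          - 2 * α * ((α+δ) * B + (δ+α) * B + (γ+β) * 0)
          - 2 * β * ((β+γ) * B + (δ+α) * 0 + (γ+β) * B)
          - 2 * γ * ((β+γ) * B + (α+δ) * 0 + (γ+β) * B)
          - 2 * δ * ((α+δ) * B + (β+γ) * 0 + (δ+α) * B) := hQ0
      have key : B * (B * ((δ+α) ^ 2 + (γ+β) ^ 2 + (β+γ) ^ 2 + (α+δ) ^ 2)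
          + A * (B ^ 2 + B ^ 2 + (0:ℝ) ^ 2)
          - 2 * α * ((α+δ) * B + (δ+α) * B + (γ+β) * 0)
          - 2 * β * ((β+γ) * B + (δ+α) * 0 + (γ+β) * B)
          - 2 * γ * ((β+γ) * B + (α+δ) * 0 + (γ+β) * B)
          - 2 * δ * ((α+δ) * B + (β+γ) * 0 + (δ+α) * B))
          = B^2 * (2*E - 4*p) := by
        rw [hpdef]
        linear_combination (B^2 + B^2) * hAB
      clear hQ0 hne
      have h2p : 0 < 2*E - 4*p := by nlinarith [mul_pos hB hQ, sq_nonneg B]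
      have h1 : 0 < E - 2*p := by linarith
      have h2 : 0 < E + 2*p := by linarith
      nlinarith [mul_pos h1 h2]
    refine ⟨hD2, ?_⟩
    set y0 : ℝ := 2*p*(2*r*E+4*p*q) + 2*q*(E^2-4*p^2) with hy0
    set y1 : ℝ := E*(2*r*E+4*p*q) with hy1
    set y2 : ℝ := E*(E^2-4*p^2) with hy2
    have hy2pos : 0 < y2 := by rw [hy2]; exact mul_pos hEpos hD2
    have hne : vec7 (δ*y0+α*y1+β*y2) (γ*y0+β*y1+α*y2) (β*y0+γ*y1+δ*y2) (α*y0+δ*y1+γ*y2)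
        (B*y0) (B*y1) (B*y2) ≠ 0 := by
      intro h0
      have h6 : B * y2 = (0:ℝ) := congrFun h0 (6 : Fin 7)
      nlinarith
    have hQ0 := h _ hne
    have hQ : 0 < B * ((δ*y0+α*y1+β*y2) ^ 2 + (γ*y0+β*y1+α*y2) ^ 2 + (β*y0+γ*y1+δ*y2) ^ 2
          + (α*y0+δ*y1+γ*y2) ^ 2)
        + A * ((B*y0) ^ 2 + (B*y1) ^ 2 + (B*y2) ^ 2)
        - 2 * α * ((α*y0+δ*y1+γ*y2) * (B*y0) + (δ*y0+α*y1+β*y2) * (B*y1) + (γ*y0+β*y1+α*y2) * (B*y2))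
        - 2 * β * ((β*y0+γ*y1+δ*y2) * (B*y0) + (δ*y0+α*y1+β*y2) * (B*y2) + (γ*y0+β*y1+α*y2) * (B*y1))
        - 2 * γ * ((β*y0+γ*y1+δ*y2) * (B*y1) + (α*y0+δ*y1+γ*y2) * (B*y2) + (γ*y0+β*y1+α*y2) * (B*y0))
        - 2 * δ * ((α*y0+δ*y1+γ*y2) * (B*y1) + (β*y0+γ*y1+δ*y2) * (B*y2) + (δ*y0+α*y1+β*y2) * (B*y0)) := hQ0
    set Qv : ℝ := B * ((δ*y0+α*y1+β*y2) ^ 2 + (γ*y0+β*y1+α*y2) ^ 2 + (β*y0+γ*y1+δ*y2) ^ 2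
          + (α*y0+δ*y1+γ*y2) ^ 2)
        + A * ((B*y0) ^ 2 + (B*y1) ^ 2 + (B*y2) ^ 2)
        - 2 * α * ((α*y0+δ*y1+γ*y2) * (B*y0) + (δ*y0+α*y1+β*y2) * (B*y1) + (γ*y0+β*y1+α*y2) * (B*y2))
        - 2 * β * ((β*y0+γ*y1+δ*y2) * (B*y0) + (δ*y0+α*y1+β*y2) * (B*y2) + (γ*y0+β*y1+α*y2) * (B*y1))
        - 2 * γ * ((β*y0+γ*y1+δ*y2) * (B*y1) + (α*y0+δ*y1+γ*y2) * (B*y2) + (γ*y0+β*y1+α*y2) * (B*y0))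
        - 2 * δ * ((α*y0+δ*y1+γ*y2) * (B*y1) + (β*y0+γ*y1+δ*y2) * (B*y2) + (δ*y0+α*y1+β*y2) * (B*y0))
      with hQvdef
    have m := master7 B E A α β γ δ (δ*y0+α*y1+β*y2) (γ*y0+β*y1+α*y2) (β*y0+γ*y1+δ*y2)
        (α*y0+δ*y1+γ*y2) (B*y0) (B*y1) (B*y2) p q r hAB hpdef hqdef hrdef
    have hBQ : B * Qv = E*((B*y0)^2+(B*y1)^2+(B*y2)^2) - 4*p*(B*y0)*(B*y1)
        - 4*q*(B*y0)*(B*y2) - 4*r*(B*y1)*(B*y2) := by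
      rw [hQvdef]
      linear_combination m
    have n := Nid7 E p q r (B*y0) (B*y1) (B*y2)
    have hNN : E * (E^2 - 4*p^2) * (B * Qv)
        = E * (E^3 - 4*E*(p^2+q^2+r^2) - 16*p*q*r) * (B*y2)^2 := by
      rw [hy0, hy1, hy2] at hBQ n
      rw [hBQ, hy2]
      linear_combination n
    clear m n hBQ hQ0 hne
    have hprod : 0 < E * (E^2 - 4*p^2) * (B * Qv) :=
      mul_pos (mul_pos hEpos hD2) (mul_pos hB hQ)
    rw [hNN] at hprod
    have hsq : 0 < (B*y2)^2 := pow_pos (mul_pos hB hy2pos) 2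
    exact pos_of_mul_pos3 E _ _ hEpos hsq hprod
  · rintro ⟨hD2, hD3⟩ ξ hξ
    have m := master7 B E A α β γ δ (ξ 0) (ξ 1) (ξ 2) (ξ 3) (ξ 4) (ξ 5) (ξ 6)
        p q r hAB hpdef hqdef hrdef
    have n := Nid7 E p q r (ξ 4) (ξ 5) (ξ 6)
    set s0 : ℝ := B*(ξ 0) - (δ*(ξ 4)+α*(ξ 5)+β*(ξ 6)) with hs0
    set s1 : ℝ := B*(ξ 1) - (γ*(ξ 4)+β*(ξ 5)+α*(ξ 6)) with hs1
    set s2 : ℝ := B*(ξ 2) - (β*(ξ 4)+γ*(ξ 5)+δ*(ξ 6)) with hs2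
    set s3 : ℝ := B*(ξ 3) - (α*(ξ 4)+δ*(ξ 5)+γ*(ξ 6)) with hs3
    set L1 : ℝ := E*(ξ 4) - 2*p*(ξ 5) - 2*q*(ξ 6) with hL1
    set L2 : ℝ := (E^2-4*p^2)*(ξ 5) - (2*r*E+4*p*q)*(ξ 6) with hL2
    set Qv : ℝ := B * ((ξ 0) ^ 2 + (ξ 1) ^ 2 + (ξ 2) ^ 2 + (ξ 3) ^ 2)
        + A * ((ξ 4) ^ 2 + (ξ 5) ^ 2 + (ξ 6) ^ 2)
        - 2 * α * (ξ 3 * ξ 4 + ξ 0 * ξ 5 + ξ 1 * ξ 6)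
        - 2 * β * (ξ 2 * ξ 4 + ξ 0 * ξ 6 + ξ 1 * ξ 5)
        - 2 * γ * (ξ 2 * ξ 5 + ξ 3 * ξ 6 + ξ 1 * ξ 4)
        - 2 * δ * (ξ 3 * ξ 5 + ξ 2 * ξ 6 + ξ 0 * ξ 4) with hQvdef
    have hterm : E * (E^2-4*p^2) * (B * Qv)
        = E * (E^2-4*p^2) * (s0^2 + s1^2 + s2^2 + s3^2)
          + (E^2-4*p^2) * L1^2 + L2^2
          + E * (E^3 - 4*E*(p^2+q^2+r^2) - 16*p*q*r) * (ξ 6)^2 := by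
      rw [hQvdef, hs0, hs1, hs2, hs3, hL1, hL2]
      linear_combination (E * (E^2-4*p^2)) * m + n
    clear m n
    by_contra hneg
    push_neg at hneg
    have hED2 : 0 < E * (E^2-4*p^2) := mul_pos hEpos hD2
    have hED3 : 0 < E * (E^3 - 4*E*(p^2+q^2+r^2) - 16*p*q*r) := mul_pos hEpos hD3
    have hBQle : E * (E^2-4*p^2) * (B * Qv) ≤ 0 := helper_T1 _ _ _ hED2 hB hneg
    have t0 : 0 ≤ E * (E^2-4*p^2) * (s0^2 + s1^2 + s2^2 + s3^2) :=
      mul_nonneg hED2.le (by positivity)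
    have t1 : 0 ≤ (E^2-4*p^2) * L1^2 := mul_nonneg hD2.le (sq_nonneg _)
    have t2 : 0 ≤ L2^2 := sq_nonneg _
    have t3 : 0 ≤ E * (E^3 - 4*E*(p^2+q^2+r^2) - 16*p*q*r) * (ξ 6)^2 :=
      mul_nonneg hED3.le (sq_nonneg _)
    -- each term is ≤ 0 hence zero
    have e3 : E * (E^3 - 4*E*(p^2+q^2+r^2) - 16*p*q*r) * (ξ 6)^2 ≤ 0 := by linarith
    have hx6 : ξ 6 = 0 := sq_le_zero' (nonpos_of_pos_mul _ _ hED3 e3)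
    have eL2 : L2^2 ≤ 0 := by linarith
    have hL2z : L2 = 0 := sq_le_zero' eL2
    have hx5 : ξ 5 = 0 := by
      have h5 : (E^2-4*p^2) * (ξ 5) = 0 := by
        rw [hL2, hx6] at hL2z; linarith [hL2z]
      exact (mul_eq_zero.mp h5).resolve_left hD2.ne'
    have eL1 : (E^2-4*p^2) * L1^2 ≤ 0 := by linarith
    have hL1z : L1 = 0 := sq_le_zero' (nonpos_of_pos_mul _ _ hD2 eL1)
    have hx4 : ξ 4 = 0 := by
      have h4 : E * (ξ 4) = 0 := by
        rw [hL1, hx5, hx6] at hL1z; linarith [hL1z]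
      exact (mul_eq_zero.mp h4).resolve_left hEpos.ne'
    have eS : E * (E^2-4*p^2) * (s0^2 + s1^2 + s2^2 + s3^2) ≤ 0 := by linarith
    have hSle : s0^2 + s1^2 + s2^2 + s3^2 ≤ 0 := nonpos_of_pos_mul _ _ hED2 eS
    have hs0z : s0 = 0 := sq_le_zero' (by linarith [sq_nonneg s1, sq_nonneg s2, sq_nonneg s3])
    have hs1z : s1 = 0 := sq_le_zero' (by linarith [sq_nonneg s0, sq_nonneg s2, sq_nonneg s3])
    have hs2z : s2 = 0 := sq_le_zero' (by linarith [sq_nonneg s0, sq_nonneg s1, sq_nonneg s3])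
    have hs3z : s3 = 0 := sq_le_zero' (by linarith [sq_nonneg s0, sq_nonneg s1, sq_nonneg s2])
    have hx0 : ξ 0 = 0 := by
      rw [hs0, hx4, hx5, hx6] at hs0z
      have : B * (ξ 0) = 0 := by linarith [hs0z]
      exact (mul_eq_zero.mp this).resolve_left hB.ne'
    have hx1 : ξ 1 = 0 := by
      rw [hs1, hx4, hx5, hx6] at hs1z
      have : B * (ξ 1) = 0 := by linarith [hs1z]
      exact (mul_eq_zero.mp this).resolve_left hB.ne'
    have hx2 : ξ 2 = 0 := by
      rw [hs2, hx4, hx5, hx6] at hs2z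
      have : B * (ξ 2) = 0 := by linarith [hs2z]
      exact (mul_eq_zero.mp this).resolve_left hB.ne'
    have hx3 : ξ 3 = 0 := by
      rw [hs3, hx4, hx5, hx6] at hs3z
      have : B * (ξ 3) = 0 := by linarith [hs3z]
      exact (mul_eq_zero.mp this).resolve_left hB.ne'
    apply hξ
    funext i
    fin_cases i <;>
      first | exact hx0 | exact hx1 | exact hx2 | exact hx3 | exact hx4 | exact hx5 | exact hx6
end
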